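/- Let H be d×d positive definite, h ∈ R^d, u ∈ R^d with ‖u‖₂ ≤ 1, ‖h‖₂ ≤ 1, β > 0, and suppose H ⪰ βI. For 𝐔 = [[U+uu^T, u],[u^T, 1]] with U positive semi-definite, and 𝚺 = [[H+hh^T, h],[h^T, 1+β]], we have tr(𝐔 𝚺^{-1}) ≥ (1/4)‖u−h‖²_{H^{-1}} − 1/4. -/

import Mathlib

open Matrix

variable {n : Type*} [Fintype n] [DecidableEq n]

open scoped MatrixOrder in
lemma psd_eq_ct_mul_self {M : Matrix n n ℝ} (hM : M.PosSemidef) : ∃ B : Matrix n n ℝ, M = Bᴴ * B := by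
  obtain ⟨B, rfl⟩ := CStarAlgebra.nonneg_iff_eq_star_mul_self.mp hM.nonneg
  exact ⟨B, rfl⟩

lemma dot_self_nonneg' (x : n → ℝ) : 0 ≤ x ⬝ᵥ x :=
  Finset.sum_nonneg fun i _ => mul_self_nonneg _

lemma quad_le_trace_mul {M : Matrix n n ℝ} (hM : M.PosSemidef) (y : n → ℝ) :
    y ⬝ᵥ M *ᵥ y ≤ M.trace * (y ⬝ᵥ y) := by
  obtain ⟨B, rfl⟩ := psd_eq_ct_mul_self hM
  rw [conjTranspose_eq_transpose_of_trivial]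
  rw [← mulVec_mulVec, dotProduct_mulVec, vecMul_transpose]
  calc (B *ᵥ y) ⬝ᵥ (B *ᵥ y) = ∑ i, (∑ j, B i j * y j)^2 := by
        simp [dotProduct, mulVec, sq]
    _ ≤ ∑ i, (∑ j, (B i j)^2) * (∑ j, (y j)^2) :=
        Finset.sum_le_sum fun i _ => Finset.sum_mul_sq_le_sq_mul_sq _ _ _
    _ = (Bᵀ*B).trace * (y ⬝ᵥ y) := by
        rw [← Finset.sum_mul]
        congr 1
        · rw [Finset.sum_comm]
          simp [trace, mul_apply, diag, sq]
        · simp [dotProduct, sq]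

lemma psd_cauchy {M : Matrix n n ℝ} (hM : M.PosSemidef) (x y : n → ℝ) :
    (x ⬝ᵥ M *ᵥ y)^2 ≤ (x ⬝ᵥ M *ᵥ x) * (y ⬝ᵥ M *ᵥ y) := by
  obtain ⟨B, rfl⟩ := psd_eq_ct_mul_self hM
  rw [conjTranspose_eq_transpose_of_trivial]
  have key : ∀ a b : n → ℝ, a ⬝ᵥ (Bᵀ*B) *ᵥ b = (B *ᵥ a) ⬝ᵥ (B *ᵥ b) := by
    intro a b
    rw [← mulVec_mulVec, dotProduct_mulVec, vecMul_transpose]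
  rw [key, key, key]
  calc ((B *ᵥ x) ⬝ᵥ (B *ᵥ y))^2 = (∑ i, (B *ᵥ x) i * (B *ᵥ y) i)^2 := by rfl
    _ ≤ (∑ i, ((B *ᵥ x) i)^2) * (∑ i, ((B *ᵥ y) i)^2) :=
        Finset.sum_mul_sq_le_sq_mul_sq _ _ _
    _ = ((B *ᵥ x) ⬝ᵥ (B *ᵥ x)) * ((B *ᵥ y) ⬝ᵥ (B *ᵥ y)) := by simp [dotProduct, sq]

lemma vecMulVec_mulVec' (a b x : n → ℝ) : vecMulVec a b *ᵥ x = (b ⬝ᵥ x) • a := by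
  ext i
  simp only [vecMulVec_apply, mulVec, dotProduct, Pi.smul_apply, smul_eq_mul, Finset.sum_mul]
  exact Finset.sum_congr rfl fun j _ => by ring

lemma quad_vecMulVec (a x : n → ℝ) : x ⬝ᵥ (vecMulVec a a *ᵥ x) = (a ⬝ᵥ x)^2 := by
  rw [vecMulVec_mulVec', dotProduct_smul, smul_eq_mul, dotProduct_comm, sq]

lemma posSemidef_vecMulVec (a : n → ℝ) : (vecMulVec a a).PosSemidef := by
  apply PosSemidef.of_dotProduct_mulVec_nonneg
  · ext i j
    simp [vecMulVec_apply, conjTranspose_apply, mul_comm]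
  · intro x
    rw [star_trivial, quad_vecMulVec]
    exact sq_nonneg _

lemma quad_fromBlocks_diag {d : ℕ} (A : Matrix (Fin d) (Fin d) ℝ) (c : ℝ)
    (w : Fin d → ℝ) (t : Fin 1 → ℝ) :
    Sum.elim w t ⬝ᵥ (fromBlocks A 0 0 (c • (1 : Matrix (Fin 1) (Fin 1) ℝ)) *ᵥ Sum.elim w t)
      = w ⬝ᵥ A *ᵥ w + c * (t 0)^2 := by
  rw [fromBlocks_mulVec, sumElim_dotProduct_sumElim]
  simp [smul_mulVec, one_mulVec, dotProduct_smul, dotProduct, Fin.sum_univ_one, sq]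
  ring

lemma blocks_decomp {d : ℕ} (A : Matrix (Fin d) (Fin d) ℝ) (v : Fin d → ℝ) (c : ℝ) :
    fromBlocks (A + vecMulVec v v) (replicateCol (Fin 1) v) (replicateRow (Fin 1) v)
        (c • (1 : Matrix (Fin 1) (Fin 1) ℝ)) =
      fromBlocks A 0 0 ((c-1) • (1 : Matrix (Fin 1) (Fin 1) ℝ))
        + vecMulVec (Sum.elim v (fun _ => 1)) (Sum.elim v (fun _ => 1)) := by
  ext i j
  cases i <;> cases j <;>
    simp [fromBlocks, vecMulVec_apply, Matrix.one_apply, Matrix.add_apply, replicateCol, replicateRow,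
      Matrix.smul_apply, Fin.eq_zero] <;> ring
lemma trace_mul_psd_nonneg {A B : Matrix n n ℝ} (hA : A.PosSemidef) (hB : B.PosSemidef) :
    0 ≤ (A * B).trace := by
  obtain ⟨C, rfl⟩ := psd_eq_ct_mul_self hA
  rw [Matrix.mul_assoc, trace_mul_comm]

  have h2 : (C * B * Cᴴ).PosSemidef := by
    have := hB.mul_mul_conjTranspose_same C
    simpa [Matrix.mul_assoc] using this
  have hdiag : ∀ i, 0 ≤ (C * B * Cᴴ) i i := by
    intro i
    have := h2.dotProduct_mulVec_nonneg (Pi.single i 1)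
    simpa [dotProduct, mulVec, Pi.single_apply, mul_ite, Finset.sum_ite_eq,
      Finset.sum_ite_eq'] using this
  simpa [Matrix.trace, Matrix.diag] using Finset.sum_nonneg fun i _ => hdiag i

open scoped MatrixOrder in
lemma rayleigh_le_trace {A S : Matrix n n ℝ} (hA : A.PosSemidef) (hS : S.PosDef)
    (x : n → ℝ) : x ⬝ᵥ A *ᵥ x ≤ (A * S⁻¹).trace * (x ⬝ᵥ S *ᵥ x) := by
  set T := CFC.sqrt S with hTdef
  have hT : T * T = S := CFC.sqrt_mul_sqrt_self S hS.posSemidef.nonneg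
  have hTsym : Tᵀ = T := by
    have := (CFC.sqrt_nonneg S).posSemidef.1
    rwa [IsHermitian, conjTranspose_eq_transpose_of_trivial] at this
  have hdet : IsUnit T.det := by
    have hSdet : 0 < S.det := hS.det_pos
    rw [← hT, det_mul] at hSdet
    have : T.det ≠ 0 := by intro h; rw [h] at hSdet; simp at hSdet
    exact isUnit_iff_ne_zero.mpr this
  have hTiT : T⁻¹ * T = 1 := nonsing_inv_mul T hdet
  have hTTi : T * T⁻¹ = 1 := mul_nonsing_inv T hdet
  have hTisym : (T⁻¹)ᵀ = T⁻¹ := by rw [transpose_nonsing_inv, hTsym]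
  have hSinv : S⁻¹ = T⁻¹ * T⁻¹ := by rw [← hT, Matrix.mul_inv_rev]
  set M := T⁻¹ * A * T⁻¹ with hMdef
  have hMpsd : M.PosSemidef := by
    have := hA.mul_mul_conjTranspose_same T⁻¹
    simpa [hMdef, conjTranspose_eq_transpose_of_trivial, hTisym, Matrix.mul_assoc] using this
  have htr : M.trace = (A * S⁻¹).trace := by
    rw [hMdef, hSinv, trace_mul_comm, ← Matrix.mul_assoc, trace_mul_comm]
  have key := quad_le_trace_mul hMpsd (T *ᵥ x)
  have hdt : ∀ z : n → ℝ, (T *ᵥ x) ⬝ᵥ z = x ⬝ᵥ (T *ᵥ z) := by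
    intro z
    rw [dotProduct_comm, dotProduct_mulVec, ← mulVec_transpose, hTsym, dotProduct_comm]
  have e1 : (T *ᵥ x) ⬝ᵥ M *ᵥ (T *ᵥ x) = x ⬝ᵥ A *ᵥ x := by
    rw [hdt, mulVec_mulVec, mulVec_mulVec, hMdef]
    rw [show T * (T⁻¹ * A * T⁻¹) * T = A by
      simp only [Matrix.mul_assoc, hTiT, Matrix.mul_one]
      rw [← Matrix.mul_assoc, hTTi, Matrix.one_mul]]
  have e2 : (T *ᵥ x) ⬝ᵥ (T *ᵥ x) = x ⬝ᵥ S *ᵥ x := by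
    rw [hdt, mulVec_mulVec, hT]
  rw [e1, e2, htr] at key
  exact key

lemma posSemidef_fromBlocks_diag {d : ℕ} {A : Matrix (Fin d) (Fin d) ℝ}
    (hA : A.PosSemidef) {c : ℝ} (hc : 0 ≤ c) :
    (fromBlocks A 0 0 (c • (1 : Matrix (Fin 1) (Fin 1) ℝ))).PosSemidef := by
  apply PosSemidef.of_dotProduct_mulVec_nonneg
  · have hAt : Aᵀ = A := by rw [← conjTranspose_eq_transpose_of_trivial, hA.1.eq]
    unfold IsHermitian
    rw [fromBlocks_conjTranspose]
    simp [hAt]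
  · intro x
    obtain ⟨w', t', rfl⟩ : ∃ w' t', x = Sum.elim w' t' :=
      ⟨_, _, (Sum.elim_comp_inl_inr x).symm⟩
    rw [star_trivial, quad_fromBlocks_diag]
    have h1 := hA.dotProduct_mulVec_nonneg w'
    rw [star_trivial] at h1
    have h2 : 0 ≤ c * (t' 0)^2 := mul_nonneg hc (sq_nonneg _)
    linarith

lemma posDef_sigma {d : ℕ} {H : Matrix (Fin d) (Fin d) ℝ} (hH : H.PosDef) {β : ℝ}
    (hβ : 0 < β) (h : Fin d → ℝ) :
    (fromBlocks (H + vecMulVec h h) (replicateCol (Fin 1) h) (replicateRow (Fin 1) h)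
      ((1+β) • (1 : Matrix (Fin 1) (Fin 1) ℝ))).PosDef := by
  rw [blocks_decomp]
  apply PosDef.of_dotProduct_mulVec_pos
  · exact ((posSemidef_fromBlocks_diag hH.posSemidef (c := 1+β-1) (by linarith)).1).add
      (posSemidef_vecMulVec _).1
  · intro x hx
    obtain ⟨w', t', rfl⟩ : ∃ w' t', x = Sum.elim w' t' :=
      ⟨_, _, (Sum.elim_comp_inl_inr x).symm⟩
    rw [star_trivial, add_mulVec, dotProduct_add, quad_fromBlocks_diag, quad_vecMulVec]
    by_cases hw' : w' = 0
    · have ht0 : t' 0 ≠ 0 := by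
        intro h0
        apply hx
        funext i
        cases i with
        | inl i => simp [hw']
        | inr i => simpa [Fin.eq_zero i] using h0
      have h2 : 0 < (t' 0)^2 := by positivity
      have h3 : 0 ≤ w' ⬝ᵥ H *ᵥ w' := by
        have := hH.posSemidef.dotProduct_mulVec_nonneg w'; rwa [star_trivial] at this
      nlinarith [sq_nonneg (Sum.elim h (fun _ => (1:ℝ)) ⬝ᵥ Sum.elim w' t')]
    · have h1 : 0 < w' ⬝ᵥ H *ᵥ w' := by
        have := hH.dotProduct_mulVec_pos hw'; rwa [star_trivial] at this
      nlinarith [sq_nonneg (t' 0), sq_nonneg (Sum.elim h (fun _ => (1:ℝ)) ⬝ᵥ Sum.elim w' t')]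

theorem lifted_trace_quarter_bound {d : ℕ} (H U : Matrix (Fin d) (Fin d) ℝ)
    (u h : Fin d → ℝ) (β : ℝ) (hβ : 0 < β)
    (hH : H.PosDef) (hHβ : (H - β • (1 : Matrix (Fin d) (Fin d) ℝ)).PosSemidef)
    (hU : U.PosSemidef) (hu : u ⬝ᵥ u ≤ 1) (hh : h ⬝ᵥ h ≤ 1) :
    (1 / 4) * ((u - h) ⬝ᵥ (H⁻¹ *ᵥ (u - h))) - 1 / 4
      ≤ ((fromBlocks (U + vecMulVec u u) (replicateCol (Fin 1) u) (replicateRow (Fin 1) u)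
            (1 : Matrix (Fin 1) (Fin 1) ℝ)) *
         (fromBlocks (H + vecMulVec h h) (replicateCol (Fin 1) h) (replicateRow (Fin 1) h)
            ((1 + β) • (1 : Matrix (Fin 1) (Fin 1) ℝ)))⁻¹).trace := by
  have hHdet : IsUnit H.det := isUnit_iff_ne_zero.mpr hH.det_pos.ne'
  have hHinv : (H⁻¹).PosDef := hH.inv
  set q : ℝ := (u - h) ⬝ᵥ (H⁻¹ *ᵥ (u - h)) with hq_def
  set w : Fin d → ℝ := H⁻¹ *ᵥ (u - h) with hw_def
  have hHw : H *ᵥ w = u - h := by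
    rw [hw_def, mulVec_mulVec, mul_nonsing_inv _ hHdet, one_mulVec]
  set a : ℝ := h ⬝ᵥ w with ha_def
  have hq0 : 0 ≤ q := by
    have := hHinv.posSemidef.dotProduct_mulVec_nonneg (u - h); rwa [star_trivial] at this
  set p : ℝ := h ⬝ᵥ (H⁻¹ *ᵥ h) with hp_def
  have hp0 : 0 ≤ p := by
    have := hHinv.posSemidef.dotProduct_mulVec_nonneg h; rwa [star_trivial] at this
  -- p * β ≤ 1
  have hpβ : p * β ≤ 1 := by
    set y : Fin d → ℝ := H⁻¹ *ᵥ h with hy_def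
    have hHy : H *ᵥ y = h := by
      rw [hy_def, mulVec_mulVec, mul_nonsing_inv _ hHdet, one_mulVec]
    have h1 : β * (y ⬝ᵥ y) ≤ p := by
      have h2 := hHβ.dotProduct_mulVec_nonneg y
      rw [star_trivial, sub_mulVec, dotProduct_sub, smul_mulVec, one_mulVec,
        dotProduct_smul, hHy] at h2
      have h3 : y ⬝ᵥ h = p := by rw [hp_def, dotProduct_comm]
      rw [smul_eq_mul] at h2
      linarith
    have h4 : p^2 ≤ (h ⬝ᵥ h) * (y ⬝ᵥ y) := by
      have h5 := Finset.sum_mul_sq_le_sq_mul_sq Finset.univ h y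
      have h6 : p = ∑ i, h i * y i := by rw [hp_def]; rfl
      have h7 : h ⬝ᵥ h = ∑ i, (h i)^2 := by simp [dotProduct, sq]
      have h8 : y ⬝ᵥ y = ∑ i, (y i)^2 := by simp [dotProduct, sq]
      rw [h6, h7, h8]; exact h5
    have hyy : 0 ≤ y ⬝ᵥ y := dot_self_nonneg' y
    have h9 : p^2 ≤ y ⬝ᵥ y := by nlinarith [mul_nonneg (sub_nonneg.2 hh) hyy]
    have h10 : β * p^2 ≤ p := by nlinarith [mul_le_mul_of_nonneg_left h9 hβ.le]
    rcases eq_or_lt_of_le hp0 with hp | hp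
    · rw [← hp]; norm_num
    · nlinarith [h10, hp]
  -- a^2 ≤ p * q
  have haCS : a^2 ≤ p * q := psd_cauchy hHinv.posSemidef h (u - h)
  have hba : β * a^2 ≤ q := by
    nlinarith [mul_le_mul_of_nonneg_left haCS hβ.le,
      mul_le_mul_of_nonneg_right hpβ hq0]
  -- block matrices
  set ue : Fin d ⊕ Fin 1 → ℝ := Sum.elim u (fun _ => (1:ℝ)) with hue_def
  set he : Fin d ⊕ Fin 1 → ℝ := Sum.elim h (fun _ => (1:ℝ)) with hhe_def
  have hUdecomp : fromBlocks (U + vecMulVec u u) (replicateCol (Fin 1) u) (replicateRow (Fin 1) u)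
      (1 : Matrix (Fin 1) (Fin 1) ℝ)
      = fromBlocks U 0 0 (((1:ℝ)-1) • 1) + vecMulVec ue ue := by
    rw [← blocks_decomp U u 1, one_smul]
  have hSdecomp : fromBlocks (H + vecMulVec h h) (replicateCol (Fin 1) h) (replicateRow (Fin 1) h)
      ((1 + β) • (1 : Matrix (Fin 1) (Fin 1) ℝ))
      = fromBlocks H 0 0 ((1+β-1) • 1) + vecMulVec he he := blocks_decomp H h (1+β)
  have hUpsd : (fromBlocks (U + vecMulVec u u) (replicateCol (Fin 1) u) (replicateRow (Fin 1) u)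
      (1 : Matrix (Fin 1) (Fin 1) ℝ)).PosSemidef := by
    rw [hUdecomp]
    exact (posSemidef_fromBlocks_diag hU (by norm_num)).add (posSemidef_vecMulVec ue)
  have hSpd := posDef_sigma hH hβ h
  -- the test vector
  set x₀ : Fin d ⊕ Fin 1 → ℝ := Sum.elim w (fun _ => -a) with hx₀_def
  have hue_dot : ue ⬝ᵥ x₀ = q := by
    rw [hue_def, hx₀_def, sumElim_dotProduct_sumElim]
    have : ((fun _ => (1:ℝ)) : Fin 1 → ℝ) ⬝ᵥ ((fun _ => -a) : Fin 1 → ℝ) = -a := by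
      simp [dotProduct, Fin.sum_univ_one]
    rw [this, hq_def, sub_dotProduct, ha_def, dotProduct_comm u w, dotProduct_comm h w]
    ring
  have hhe_dot : he ⬝ᵥ x₀ = 0 := by
    rw [hhe_def, hx₀_def, sumElim_dotProduct_sumElim]
    have : ((fun _ => (1:ℝ)) : Fin 1 → ℝ) ⬝ᵥ ((fun _ => -a) : Fin 1 → ℝ) = -a := by
      simp [dotProduct, Fin.sum_univ_one]
    rw [this, ha_def]; ring
  have hNcalc : x₀ ⬝ᵥ ((fromBlocks (U + vecMulVec u u) (replicateCol (Fin 1) u) (replicateRow (Fin 1) u)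
      (1 : Matrix (Fin 1) (Fin 1) ℝ)) *ᵥ x₀)
      = w ⬝ᵥ U *ᵥ w + ((1:ℝ)-1) * (-a)^2 + q^2 := by
    rw [hUdecomp, add_mulVec, dotProduct_add, hx₀_def, quad_fromBlocks_diag,
      quad_vecMulVec, ← hx₀_def, hue_dot]
  have hDcalc : x₀ ⬝ᵥ ((fromBlocks (H + vecMulVec h h) (replicateCol (Fin 1) h) (replicateRow (Fin 1) h)
      ((1 + β) • (1 : Matrix (Fin 1) (Fin 1) ℝ))) *ᵥ x₀)
      = q + β * a^2 := by
    rw [hSdecomp, add_mulVec, dotProduct_add, hx₀_def, quad_fromBlocks_diag,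
      quad_vecMulVec, ← hx₀_def, hhe_dot]
    have hwH : w ⬝ᵥ H *ᵥ w = q := by
      rw [hHw, hq_def, dotProduct_comm]
    rw [hwH]; ring
  have key := rayleigh_le_trace hUpsd hSpd x₀
  rw [hNcalc, hDcalc] at key
  have hUw : 0 ≤ w ⬝ᵥ U *ᵥ w := by
    have := hU.dotProduct_mulVec_nonneg w; rwa [star_trivial] at this
  have hT0 := trace_mul_psd_nonneg hUpsd (Matrix.posDef_inv_iff.mpr hSpd).posSemidef
  nlinarith [key, hT0, hq0, hba, hUw, mul_nonneg hT0 hq0, mul_le_mul_of_nonneg_left hba hT0]
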